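/- A metrizable space is Stäckel-compact if and only if it is compact. -/

import Mathlib

open Filter Topology Set

def StackelCompact (X : Type*) [TopologicalSpace X] : Prop :=
  ∃ r : X → X → Prop, IsLinearOrder X r ∧
    ∀ F : Set X, IsClosed F → F.Nonempty →
      (∃ a ∈ F, ∀ x ∈ F, r a x) ∧ (∃ b ∈ F, ∀ x ∈ F, r x b)

/-- Every nonempty compact subset of `ℕ → ℝ` has a lexicographic minimum. -/
lemma lex_min_aux (K : Set (ℕ → ℝ)) (hK : IsCompact K) (hne : K.Nonempty) :
    ∃ a ∈ K, ∀ x ∈ K, toLex a ≤ toLex x := by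
  classical
  let T : ℕ → Set (ℕ → ℝ) := fun n => Nat.rec K
    (fun n S => {x ∈ S | x n = sInf ((fun y => y n) '' S)}) n
  have hTsucc : ∀ n, T (n+1) = {x ∈ T n | x n = sInf ((fun y => y n) '' T n)} := fun _ => rfl
  have key : ∀ n, IsCompact (T n) ∧ (T n).Nonempty := by
    intro n
    induction n with
    | zero => exact ⟨hK, hne⟩
    | succ n ih =>
      obtain ⟨hc, hn⟩ := ih
      have himg : IsCompact ((fun y => y n) '' T n) := hc.image (continuous_apply n)
      have hmem : sInf ((fun y => y n) '' T n) ∈ (fun y => y n) '' T n :=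
        himg.sInf_mem (hn.image _)
      obtain ⟨y, hy, hyn⟩ := hmem
      constructor
      · have heq : T (n+1) = T n ∩ (fun y => y n) ⁻¹' {sInf ((fun y => y n) '' T n)} := by
          ext z; simp [hTsucc n, Set.mem_setOf_eq]
        rw [heq]
        exact hc.inter_right ((isClosed_singleton).preimage (continuous_apply n))
      · exact ⟨y, by rw [hTsucc n]; exact ⟨hy, hyn⟩⟩
  have hsub : ∀ n, T (n+1) ⊆ T n := by
    intro n x hx; rw [hTsucc n] at hx; exact hx.1
  have hcl : ∀ n, IsClosed (T n) := fun n => (key n).1.isClosed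
  obtain ⟨a, ha⟩ := IsCompact.nonempty_iInter_of_sequence_nonempty_isCompact_isClosed
    T hsub (fun n => (key n).2) (key 0).1 hcl
  simp only [Set.mem_iInter] at ha
  refine ⟨a, ha 0, ?_⟩
  intro x hx
  have hmem : ∀ n, (∀ k < n, x k = a k) → x ∈ T n := by
    intro n
    induction n with
    | zero => exact fun _ => hx
    | succ n ih =>
      intro hk
      have hxn : x ∈ T n := ih (fun k hk' => hk k (Nat.lt_succ_of_lt hk'))
      have haT : a ∈ T (n+1) := ha (n+1)
      rw [hTsucc n] at haT ⊢
      exact ⟨hxn, by rw [hk n (Nat.lt_succ_self n)]; exact haT.2⟩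
  rcases eq_or_ne a x with h | h
  · exact le_of_eq (by rw [h])
  · have hD : ∃ n, a n ≠ x n := by
      by_contra hc
      push_neg at hc
      exact h (funext hc)
    have hlt_min : ∀ k < Nat.find hD, a k = x k := fun k hk => not_not.1 (Nat.find_min hD hk)
    have hxT : x ∈ T (Nat.find hD) := hmem _ (fun k hk => (hlt_min k hk).symm)
    have han : a (Nat.find hD) = sInf ((fun y => y (Nat.find hD)) '' T (Nat.find hD)) := by
      have h1 := ha (Nat.find hD + 1)
      rw [hTsucc (Nat.find hD)] at h1
      exact h1.2
    have hle : a (Nat.find hD) ≤ x (Nat.find hD) := by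
      rw [han]
      exact csInf_le (((key _).1.image (continuous_apply _)).bddBelow) ⟨x, hxT, rfl⟩
    have hlt : a (Nat.find hD) < x (Nat.find hD) := lt_of_le_of_ne hle (Nat.find_spec hD)
    exact le_of_lt ⟨Nat.find hD, fun j hj => hlt_min j hj, hlt⟩

/-- Every nonempty compact subset of `ℕ → ℝ` has a lexicographic maximum. -/
lemma lex_max_aux (K : Set (ℕ → ℝ)) (hK : IsCompact K) (hne : K.Nonempty) :
    ∃ b ∈ K, ∀ x ∈ K, toLex x ≤ toLex b := by
  classical
  let T : ℕ → Set (ℕ → ℝ) := fun n => Nat.rec K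
    (fun n S => {x ∈ S | x n = sSup ((fun y => y n) '' S)}) n
  have hTsucc : ∀ n, T (n+1) = {x ∈ T n | x n = sSup ((fun y => y n) '' T n)} := fun _ => rfl
  have key : ∀ n, IsCompact (T n) ∧ (T n).Nonempty := by
    intro n
    induction n with
    | zero => exact ⟨hK, hne⟩
    | succ n ih =>
      obtain ⟨hc, hn⟩ := ih
      have himg : IsCompact ((fun y => y n) '' T n) := hc.image (continuous_apply n)
      have hmem : sSup ((fun y => y n) '' T n) ∈ (fun y => y n) '' T n :=
        himg.sSup_mem (hn.image _)
      obtain ⟨y, hy, hyn⟩ := hmem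
      constructor
      · have heq : T (n+1) = T n ∩ (fun y => y n) ⁻¹' {sSup ((fun y => y n) '' T n)} := by
          ext z; simp [hTsucc n, Set.mem_setOf_eq]
        rw [heq]
        exact hc.inter_right ((isClosed_singleton).preimage (continuous_apply n))
      · exact ⟨y, by rw [hTsucc n]; exact ⟨hy, hyn⟩⟩
  have hsub : ∀ n, T (n+1) ⊆ T n := by
    intro n x hx; rw [hTsucc n] at hx; exact hx.1
  have hcl : ∀ n, IsClosed (T n) := fun n => (key n).1.isClosed
  obtain ⟨b, hb⟩ := IsCompact.nonempty_iInter_of_sequence_nonempty_isCompact_isClosed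
    T hsub (fun n => (key n).2) (key 0).1 hcl
  simp only [Set.mem_iInter] at hb
  refine ⟨b, hb 0, ?_⟩
  intro x hx
  have hmem : ∀ n, (∀ k < n, x k = b k) → x ∈ T n := by
    intro n
    induction n with
    | zero => exact fun _ => hx
    | succ n ih =>
      intro hk
      have hxn : x ∈ T n := ih (fun k hk' => hk k (Nat.lt_succ_of_lt hk'))
      have hbT : b ∈ T (n+1) := hb (n+1)
      rw [hTsucc n] at hbT ⊢
      exact ⟨hxn, by rw [hk n (Nat.lt_succ_self n)]; exact hbT.2⟩
  rcases eq_or_ne x b with h | h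
  · exact le_of_eq (by rw [h])
  · have hD : ∃ n, x n ≠ b n := by
      by_contra hc
      push_neg at hc
      exact h (funext hc)
    have hlt_min : ∀ k < Nat.find hD, x k = b k := fun k hk => not_not.1 (Nat.find_min hD hk)
    have hxT : x ∈ T (Nat.find hD) := hmem _ (fun k hk => hlt_min k hk)
    have hbn : b (Nat.find hD) = sSup ((fun y => y (Nat.find hD)) '' T (Nat.find hD)) := by
      have h1 := hb (Nat.find hD + 1)
      rw [hTsucc (Nat.find hD)] at h1
      exact h1.2
    have hle : x (Nat.find hD) ≤ b (Nat.find hD) := by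
      rw [hbn]
      exact le_csSup (((key _).1.image (continuous_apply _)).bddAbove) ⟨x, hxT, rfl⟩
    have hlt : x (Nat.find hD) < b (Nat.find hD) := lt_of_le_of_ne hle (Nat.find_spec hD)
    exact le_of_lt ⟨Nat.find hD, fun j hj => hlt_min j hj, hlt⟩

/-- A metrizable space is Stäckel-compact if and only if it is compact. -/
theorem stackelCompact_iff_compact_of_metrizable (X : Type*) [TopologicalSpace X]
    [TopologicalSpace.MetrizableSpace X] : StackelCompact X ↔ CompactSpace X := by
  classical
  constructor
  · rintro ⟨r, hlin, h⟩
    haveI := hlin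
    letI : MetricSpace X := TopologicalSpace.metrizableSpaceMetric X
    rw [compactSpace_iff_seqCompactSpace]
    refine ⟨?_⟩
    intro u _
    have key : ∃ a : X, MapClusterPt a atTop u := by
      by_contra hcl
      push_neg at hcl
      -- Step 1: the range of `u` is infinite.
      have hA : (Set.range u).Infinite := by
        by_contra hfin
        rw [Set.not_infinite] at hfin
        have hfib : ∃ y ∈ Set.range u, {n | u n = y}.Infinite := by
          by_contra hall
          push_neg at hall
          have hcov : (Set.univ : Set ℕ) ⊆ ⋃ y ∈ Set.range u, {n | u n = y} := by
            intro n _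
            exact Set.mem_biUnion (Set.mem_range_self n) rfl
          exact Set.infinite_univ
            ((Set.Finite.biUnion hfin (fun y hy => hall y hy)).subset hcov)
        obtain ⟨y, _, hy⟩ := hfib
        apply hcl y
        rw [mapClusterPt_iff_frequently]
        intro s hs
        rw [frequently_atTop]
        intro N
        obtain ⟨m, hm, hmN⟩ := hy.exists_gt N
        exact ⟨m, hmN.le, by rw [Set.mem_setOf_eq] at hm; rw [hm]; exact mem_of_mem_nhds hs⟩
      -- Step 2: every subset of the range of `u` is closed.
      have hAclosed : ∀ S : Set X, S ⊆ Set.range u → IsClosed S := by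
        intro S hS
        refine isClosed_of_closure_subset ?_
        intro x hx
        by_contra hxS
        apply hcl x
        rw [mapClusterPt_iff_frequently]
        intro s hs
        rw [frequently_atTop]
        intro N
        obtain ⟨U, hUs, hUo, hxU⟩ := mem_nhds_iff.1 hs
        have hfin : (u '' {k | k ≤ N} \ {x}).Finite :=
          ((Set.finite_Iic N).image u).diff (t := {x})
        have hW : IsOpen (U \ (u '' {k | k ≤ N} \ {x})) := hUo.sdiff hfin.isClosed
        have hxW : x ∈ U \ (u '' {k | k ≤ N} \ {x}) :=
          ⟨hxU, fun hc => hc.2 rfl⟩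
        obtain ⟨z, hzW, hzS⟩ := (mem_closure_iff.1 hx) _ hW hxW
        obtain ⟨n, rfl⟩ := hS hzS
        refine ⟨n, ?_, hUs hzW.1⟩
        by_contra hn
        push_neg at hn
        exact hzW.2 ⟨Set.mem_image_of_mem u hn.le,
          fun hzx => hxS (by rw [Set.mem_singleton_iff] at hzx; rw [← hzx]; exact hzS)⟩
      -- Step 3: build a strictly increasing sequence of least elements.
      set A : Set X := Set.range u with hAdef
      let L : Set X → X := fun S =>
        if hS : S ⊆ A ∧ S.Nonempty then (h S (hAclosed S hS.1) hS.2).1.choose else u 0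
      have hL : ∀ S : Set X, (hs : S ⊆ A) → (hn : S.Nonempty) →
          L S ∈ S ∧ ∀ x ∈ S, r (L S) x := by
        intro S hs hn
        have hspec := (h S (hAclosed S hs) hn).1.choose_spec
        simp only [L, dif_pos (⟨hs, hn⟩ : S ⊆ A ∧ S.Nonempty)]
        exact hspec
      let g : ℕ → X × Set X := fun n =>
        Nat.rec (L A, A \ {L A}) (fun _ p => (L p.2, p.2 \ {L p.2})) n
      have hgs : ∀ n, g (n+1) = (L (g n).2, (g n).2 \ {L (g n).2}) := fun _ => rfl
      have hI : ∀ n, (g n).2 ⊆ A ∧ (g n).2.Infinite ∧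
          ∀ x ∈ (g n).2, r ((g n).1) x ∧ x ≠ (g n).1 := by
        intro n
        induction n with
        | zero =>
          have hLA := hL A Set.Subset.rfl hA.nonempty
          refine ⟨Set.diff_subset, hA.diff (Set.finite_singleton _), ?_⟩
          intro x hx
          exact ⟨hLA.2 x hx.1, fun he => hx.2 (by rw [he]; exact rfl)⟩
        | succ n ih =>
          obtain ⟨hsub, hinf, _⟩ := ih
          have hLn := hL (g n).2 hsub hinf.nonempty
          rw [hgs n]
          refine ⟨Set.diff_subset.trans hsub, hinf.diff (Set.finite_singleton _), ?_⟩
          intro x hx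
          exact ⟨hLn.2 x hx.1, fun he => hx.2 (by rw [he]; exact rfl)⟩
      have hlink : ∀ n, r ((g n).1) ((g (n+1)).1) ∧ (g (n+1)).1 ≠ (g n).1 := by
        intro n
        obtain ⟨hsub, hinf, hmem⟩ := hI n
        have hLn := hL (g n).2 hsub hinf.nonempty
        exact hmem _ hLn.1
      -- the range of the first components
      have heA : ∀ n, (g n).1 ∈ A := by
        intro n
        cases n with
        | zero => exact (hL A Set.Subset.rfl hA.nonempty).1
        | succ n => exact (hI n).1 (hL (g n).2 (hI n).1 (hI n).2.1.nonempty).1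
      set B : Set X := Set.range (fun n => (g n).1) with hBdef
      have hBsub : B ⊆ A := by rintro x ⟨n, rfl⟩; exact heA n
      have hBne : B.Nonempty := ⟨(g 0).1, ⟨0, rfl⟩⟩
      obtain ⟨b, hbB, hbmax⟩ := (h B (hAclosed B hBsub) hBne).2
      obtain ⟨m, rfl⟩ := hbB
      have h1 : r ((g (m+1)).1) ((g m).1) := hbmax _ ⟨m+1, rfl⟩
      exact (hlink m).2 (antisymm h1 (hlink m).1)
    obtain ⟨a, ha⟩ := key
    obtain ⟨ψ, hψ, hts⟩ := TopologicalSpace.FirstCountableTopology.tendsto_subseq ha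
    exact ⟨a, Set.mem_univ a, ψ, hψ, hts⟩
  · intro hcomp
    cases isEmpty_or_nonempty X with
    | inl he =>
      refine ⟨fun _ _ => True, ?_, ?_⟩
      · exact { refl := fun _ => trivial,
                trans := fun _ _ _ _ _ => trivial,
                antisymm := fun a => isEmptyElim a,
                total := fun _ _ => Or.inl trivial }
      · intro F _ hne
        exact isEmptyElim hne.some
    | inr hne =>
      letI : MetricSpace X := TopologicalSpace.metrizableSpaceMetric X
      obtain ⟨d, hd⟩ := TopologicalSpace.exists_dense_seq X
      set f : X → ℕ → ℝ := fun x n => dist x (d n) with hfdef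
      have hfc : Continuous f := continuous_pi fun n => continuous_id.dist continuous_const
      have hfi : Function.Injective f := by
        intro x y hxy
        have hdd : ∀ n, dist x (d n) = dist y (d n) := fun n => congrFun hxy n
        have hle : dist x y ≤ 0 := by
          apply le_of_forall_pos_le_add
          intro ε hε
          obtain ⟨n, hn⟩ := hd.exists_dist_lt x (half_pos hε)
          have hlt : dist x y < 0 + ε := calc dist x y ≤ dist x (d n) + dist (d n) y := dist_triangle _ _ _
            _ = dist x (d n) + dist y (d n) := by rw [dist_comm (d n) y]
            _ = dist x (d n) + dist x (d n) := by rw [hdd n]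
            _ < ε / 2 + ε / 2 := by linarith
            _ = 0 + ε := by ring
          exact hlt.le
        exact eq_of_dist_eq_zero (le_antisymm hle dist_nonneg)
      refine ⟨fun x y => toLex (f x) ≤ toLex (f y), ?_, ?_⟩
      · exact { refl := fun _ => le_refl _,
                trans := fun _ _ _ h1 h2 => le_trans h1 h2,
                antisymm := fun a b h1 h2 => hfi (toLex_inj.1 (le_antisymm h1 h2)),
                total := fun _ _ => le_total _ _ }
      · intro F hF hneF
        have hFc : IsCompact F := hF.isCompact
        have himg : IsCompact (f '' F) := hFc.image hfc
        have hne3 : (f '' F).Nonempty := hneF.image f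
        obtain ⟨a', ha'K, ha'min⟩ := lex_min_aux (f '' F) himg hne3
        obtain ⟨a, haF, rfl⟩ := ha'K
        obtain ⟨b', hb'K, hb'max⟩ := lex_max_aux (f '' F) himg hne3
        obtain ⟨b, hbF, rfl⟩ := hb'K
        exact ⟨⟨a, haF, fun x hx => ha'min _ (Set.mem_image_of_mem f hx)⟩,
               ⟨b, hbF, fun x hx => hb'max _ (Set.mem_image_of_mem f hx)⟩⟩
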